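/- The quotient of the group G = ⟨a, b, t ∣ a²b², [t,ab]⟩ by the normal closure of {ab, tᵖ(ab)^q} is isomorphic to ℤ * ℤ/p, for any integers p ≥ 0 and q. -/

import Mathlib

def rels3 : Set (FreeGroup (Fin 3)) :=
  {FreeGroup.of 0 * FreeGroup.of 0 * FreeGroup.of 1 * FreeGroup.of 1,
   FreeGroup.of 2 * (FreeGroup.of 0 * FreeGroup.of 1) * (FreeGroup.of 2)⁻¹ *
     (FreeGroup.of 0 * FreeGroup.of 1)⁻¹}

/-- The group ⟨a, b, t ∣ a²b² = 1, [t, ab] = 1⟩, generators a = of 0, b = of 1, t = of 2. -/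
abbrev GroupM := PresentedGroup rels3

namespace Stmt13Aux

open Monoid Multiplicative

def S (p : ℕ) (q : ℤ) : Set GroupM :=
  {PresentedGroup.of 0 * PresentedGroup.of 1,
   PresentedGroup.of 2 ^ p * (PresentedGroup.of 0 * PresentedGroup.of 1) ^ q}

abbrev Q (p : ℕ) (q : ℤ) := GroupM ⧸ Subgroup.normalClosure (S p q)

abbrev T (p : ℕ) := Monoid.Coprod (Multiplicative ℤ) (Multiplicative (ZMod p))

def F (p : ℕ) : Fin 3 → T p
  | 0 => Coprod.inl (ofAdd 1)
  | 1 => Coprod.inl (ofAdd (-1))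
  | 2 => Coprod.inr (ofAdd 1)

lemma F_rels (p : ℕ) : ∀ r ∈ rels3, FreeGroup.lift (F p) r = 1 := by
  intro r hr
  rcases hr with h | h <;> subst h <;>
    · simp only [map_mul, map_inv, FreeGroup.lift_apply_of, F, ofAdd_neg, map_inv]
      group

def f (p : ℕ) : GroupM →* T p := PresentedGroup.toGroup (F_rels p)

lemma f_of (p : ℕ) (i : Fin 3) : f p (PresentedGroup.of i) = F p i :=
  PresentedGroup.toGroup.of _

lemma f_S (p : ℕ) (q : ℤ) : ∀ x ∈ S p q, f p x = 1 := by
  intro y hy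
  have hab : f p (PresentedGroup.of 0 * PresentedGroup.of 1) = 1 := by
    rw [map_mul, f_of, f_of]
    show Coprod.inl (ofAdd 1) * Coprod.inl (ofAdd (-1)) = 1
    rw [← map_mul, ← ofAdd_add, add_neg_cancel, ofAdd_zero, map_one]
  rcases hy with h | h <;> subst h
  · exact hab
  · rw [map_mul, map_zpow, hab, one_zpow, mul_one, map_pow, f_of]
    show Coprod.inr (ofAdd 1) ^ p = 1
    rw [← map_pow, ← ofAdd_nsmul, nsmul_eq_mul, mul_one, ZMod.natCast_self, ofAdd_zero, map_one]

def φ (p : ℕ) (q : ℤ) : Q p q →* T p :=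
  QuotientGroup.lift _ (f p)
    (fun x hx => Subgroup.normalClosure_le_normal
      (fun y hy => MonoidHom.mem_ker.mpr (f_S p q y hy)) hx)

def aQ (p : ℕ) (q : ℤ) : Q p q := QuotientGroup.mk (PresentedGroup.of 0)
def bQ (p : ℕ) (q : ℤ) : Q p q := QuotientGroup.mk (PresentedGroup.of 1)
def tQ (p : ℕ) (q : ℤ) : Q p q := QuotientGroup.mk (PresentedGroup.of 2)

lemma ab_eq (p : ℕ) (q : ℤ) : aQ p q * bQ p q = 1 := by
  rw [aQ, bQ, ← QuotientGroup.mk_mul, QuotientGroup.eq_one_iff]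
  exact Subgroup.subset_normalClosure (Or.inl rfl)

lemma tQ_pow (p : ℕ) (q : ℤ) : tQ p q ^ p = 1 := by
  have h2 : (QuotientGroup.mk (PresentedGroup.of 2 ^ p
      * (PresentedGroup.of 0 * PresentedGroup.of 1) ^ q) : Q p q) = 1 := by
    rw [QuotientGroup.eq_one_iff]
    exact Subgroup.subset_normalClosure (Or.inr rfl)
  have := ab_eq p q
  rw [aQ, bQ, ← QuotientGroup.mk_mul] at this
  rw [QuotientGroup.mk_mul, QuotientGroup.mk_zpow, this, one_zpow, mul_one,
    QuotientGroup.mk_pow] at h2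
  exact h2

def hZ (p : ℕ) (q : ℤ) : Multiplicative ℤ →* Q p q := zpowersHom _ (aQ p q)

def gAdd (p : ℕ) (q : ℤ) : ℤ →+ Additive (Q p q) :=
  MonoidHom.toAdditiveRight (zpowersHom _ (tQ p q))

lemma gAdd_p (p : ℕ) (q : ℤ) : gAdd p q p = 0 := by
  show Additive.ofMul (tQ p q ^ (p : ℤ)) = 0
  rw [zpow_natCast, tQ_pow]
  rfl

def hZp (p : ℕ) (q : ℤ) : Multiplicative (ZMod p) →* Q p q :=
  AddMonoidHom.toMultiplicativeLeft (ZMod.lift p ⟨gAdd p q, gAdd_p p q⟩)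

lemma hZp_one (p : ℕ) (q : ℤ) : hZp p q (ofAdd 1) = tQ p q := by
  show Additive.toMul (ZMod.lift p ⟨gAdd p q, gAdd_p p q⟩ (1 : ZMod p)) = tQ p q
  rw [show (1 : ZMod p) = ((1 : ℤ) : ZMod p) by norm_cast, ZMod.lift_coe]
  show Additive.toMul (Additive.ofMul (tQ p q ^ (1:ℤ))) = tQ p q
  simp

def ψ (p : ℕ) (q : ℤ) : T p →* Q p q := Coprod.lift (hZ p q) (hZp p q)

lemma multZMod_ext {p : ℕ} {M : Type*} [Group M] {f g : Multiplicative (ZMod p) →* M}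
    (h : f (ofAdd 1) = g (ofAdd 1)) : f = g := by
  apply MonoidHom.ext; intro x
  obtain ⟨m, hm⟩ := ZMod.intCast_surjective (toAdd x)
  have hx : x = ofAdd (1 : ZMod p) ^ m := by
    apply_fun toAdd
    simp [← hm, zsmul_eq_mul]
  rw [hx, map_zpow, map_zpow, h]

end Stmt13Aux

open Stmt13Aux Monoid Multiplicative

/-- ⟨a,b,t ∣ a²b², [t,ab]⟩ modulo the normal closure of {ab, tᵖ(ab)^q} is ℤ * ℤ/p. -/
theorem stmt13 (p : ℕ) (q : ℤ) :
    Nonempty ((GroupM ⧸ Subgroup.normalClosure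
      ({PresentedGroup.of 0 * PresentedGroup.of 1,
        PresentedGroup.of 2 ^ p * (PresentedGroup.of 0 * PresentedGroup.of 1) ^ q} :
        Set GroupM)) ≃*
      Monoid.Coprod (Multiplicative ℤ) (Multiplicative (ZMod p))) := by
  refine ⟨MonoidHom.toMulEquiv (φ p q) (ψ p q) ?_ ?_⟩
  · apply QuotientGroup.monoidHom_ext
    apply PresentedGroup.ext
    intro i
    fin_cases i <;>
      simp only [MonoidHom.comp_apply, QuotientGroup.mk'_apply, MonoidHom.id_apply]
    · show ψ p q (φ p q (aQ p q)) = aQ p q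
      rw [φ, aQ, QuotientGroup.lift_mk', f_of]
      show ψ p q (Coprod.inl (ofAdd 1)) = aQ p q
      rw [ψ, Coprod.lift_apply_inl]
      show aQ p q ^ (1:ℤ) = aQ p q
      simp
    · show ψ p q (φ p q (bQ p q)) = bQ p q
      rw [φ, bQ, QuotientGroup.lift_mk', f_of]
      show ψ p q (Coprod.inl (ofAdd (-1))) = bQ p q
      rw [ψ, Coprod.lift_apply_inl]
      show aQ p q ^ (-1:ℤ) = bQ p q
      rw [zpow_neg_one]
      exact mul_eq_one_iff_inv_eq.mp (ab_eq p q)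
    · show ψ p q (φ p q (tQ p q)) = tQ p q
      rw [φ, tQ, QuotientGroup.lift_mk', f_of]
      show ψ p q (Coprod.inr (ofAdd 1)) = tQ p q
      rw [ψ, Coprod.lift_apply_inr, hZp_one]
  · apply Coprod.hom_ext
    · apply MonoidHom.ext_mint
      show φ p q (ψ p q (Coprod.inl (ofAdd 1))) = Coprod.inl (ofAdd 1)
      rw [ψ, Coprod.lift_apply_inl]
      show φ p q (aQ p q ^ (1:ℤ)) = _
      rw [zpow_one, φ, aQ, QuotientGroup.lift_mk', f_of]
      rfl
    · apply multZMod_ext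
      show φ p q (ψ p q (Coprod.inr (ofAdd 1))) = Coprod.inr (ofAdd 1)
      rw [ψ, Coprod.lift_apply_inr, hZp_one, φ, tQ, QuotientGroup.lift_mk', f_of]
      rfl
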